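/- Let 𝒢 be the continuous graph of a connected weighted graph G, let s be a point of 𝒢, and let T_s be a shortest-path tree rooted at s spanning V(G). For each edge xy ∈ E(G) \ E(T_s), let ω_s(xy) = ( d(s,x) + ℓ(xy) + d(s,y) ) / 2. Then the eccentricity of s in 𝒢 satisfies ecc(s,𝒢) = max( max_{x ∈ V(G)} d(s,x), max_{xy ∉ E(T_s)} ω_s(xy) ). -/

import Mathlib

open SimpleGraph

variable {V : Type*}

/-- Length of a walk in a weighted graph: the sum of the lengths of its edges,
counted with multiplicity. -/
noncomputable def walkLen (ℓ : V → V → ℝ) {G : SimpleGraph V} {a b : V} (w : G.Walk a b) : ℝ :=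
  (w.darts.map (fun d => ℓ d.toProd.1 d.toProd.2)).sum

/-- Shortest-path distance in the weighted graph: infimum of walk lengths. -/
noncomputable def gdist (G : SimpleGraph V) (ℓ : V → V → ℝ) (a b : V) : ℝ :=
  sInf {x | ∃ w : G.Walk a b, walkLen ℓ w = x}

/-- Endpoint (`u` or `v`) of the edge carrying a point `(u, v, lam)` of the continuous graph. -/
def ept (p : V × V × ℝ) : Bool → V := fun i => if i then p.2.1 else p.1

/-- Offset of a point `(u, v, lam)` of the continuous graph to the chosen endpoint of its edge. -/
def off (ℓ : V → V → ℝ) (p : V × V × ℝ) : Bool → ℝ :=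
  fun i => if i then ℓ p.1 p.2.1 - p.2.2 else p.2.2

/-- Geodesic distance between two points of the continuous graph `𝒢` of `G`:
a point `(u, v, lam)` lies on edge `uv` at distance `lam` along the edge from `u`.
It is the infimum of the lengths of all connections: leave the first edge through one of
its endpoints, walk in `G`, and enter the second edge through one of its endpoints;
or, if both points lie on the same edge, travel directly along that edge. -/
noncomputable def pdist (G : SimpleGraph V) (ℓ : V → V → ℝ) (p q : V × V × ℝ) : ℝ :=
  sInf ({x | ∃ (i j : Bool) (w : G.Walk (ept p i) (ept q j)),
        x = off ℓ p i + walkLen ℓ w + off ℓ q j}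
    ∪ {x | (p.1, p.2.1) = (q.1, q.2.1) ∧ x = |p.2.2 - q.2.2|}
    ∪ {x | (p.1, p.2.1) = (q.2.1, q.1) ∧ x = |p.2.2 - (ℓ q.1 q.2.1 - q.2.2)|})


section helpers
variable {ℓ : V → V → ℝ} {H : SimpleGraph V}

lemma walkLen_nonneg (hnn : ∀ u v, 0 ≤ ℓ u v) {a b : V} (w : H.Walk a b) :
    0 ≤ walkLen ℓ w := by
  apply List.sum_nonneg
  rintro x hx
  simp only [List.mem_map] at hx
  obtain ⟨d, -, rfl⟩ := hx
  exact hnn _ _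

lemma walkLen_nil {a : V} : walkLen ℓ (SimpleGraph.Walk.nil : H.Walk a a) = 0 := by
  simp [walkLen]

lemma walkLen_cons {a b c : V} (h : H.Adj a b) (w : H.Walk b c) :
    walkLen ℓ (SimpleGraph.Walk.cons h w) = ℓ a b + walkLen ℓ w := by
  simp [walkLen]

lemma walkLen_append {a b c : V} (p : H.Walk a b) (q : H.Walk b c) :
    walkLen ℓ (p.append q) = walkLen ℓ p + walkLen ℓ q := by
  simp [walkLen, SimpleGraph.Walk.darts_append]

lemma walkLen_mapLe {H' : SimpleGraph V} (h : H ≤ H') {a b : V} (w : H.Walk a b) :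
    walkLen ℓ (w.mapLe h) = walkLen ℓ w := by
  induction w with
  | nil => simp [walkLen]
  | cons hadj p ih =>
    simp only [SimpleGraph.Walk.mapLe] at ih ⊢
    simp [walkLen_cons, SimpleGraph.Walk.map_cons, ih]

lemma gdist_bddBelow (hnn : ∀ u v, 0 ≤ ℓ u v) (a b : V) :
    BddBelow {x | ∃ w : H.Walk a b, walkLen ℓ w = x} := by
  refine ⟨0, ?_⟩
  rintro x ⟨w, rfl⟩
  exact walkLen_nonneg hnn w

lemma gdist_le_walkLen (hnn : ∀ u v, 0 ≤ ℓ u v) {a b : V} (w : H.Walk a b) :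
    gdist H ℓ a b ≤ walkLen ℓ w :=
  csInf_le (gdist_bddBelow hnn a b) ⟨w, rfl⟩

lemma le_gdist {a b : V} {c : ℝ} (hne : H.Reachable a b)
    (h : ∀ w : H.Walk a b, c ≤ walkLen ℓ w) : c ≤ gdist H ℓ a b := by
  obtain ⟨w0⟩ := hne
  refine le_csInf ⟨_, w0, rfl⟩ ?_
  rintro x ⟨w, rfl⟩
  exact h w

lemma gdist_nonneg (hnn : ∀ u v, 0 ≤ ℓ u v) {a b : V} (hne : H.Reachable a b) :
    0 ≤ gdist H ℓ a b :=
  le_gdist hne fun w => walkLen_nonneg hnn w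

lemma gdist_self (hnn : ∀ u v, 0 ≤ ℓ u v) (a : V) : gdist H ℓ a a = 0 := by
  refine le_antisymm ?_ (gdist_nonneg hnn (SimpleGraph.Reachable.refl a))
  have := gdist_le_walkLen (H := H) hnn (SimpleGraph.Walk.nil : H.Walk a a)
  rwa [walkLen_nil] at this

lemma gdist_adj (hnn : ∀ u v, 0 ≤ ℓ u v) {s a b : V} (hne : H.Reachable s a)
    (h : H.Adj a b) : gdist H ℓ s b ≤ gdist H ℓ s a + ℓ a b := by
  rw [← sub_le_iff_le_add]
  refine le_gdist hne fun w => ?_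
  rw [sub_le_iff_le_add]
  have := gdist_le_walkLen hnn (w.append (SimpleGraph.Walk.cons h SimpleGraph.Walk.nil))
  rwa [walkLen_append, walkLen_cons, walkLen_nil, add_zero] at this

lemma gdist_anti {H' : SimpleGraph V} (hle : H ≤ H') (hnn : ∀ u v, 0 ≤ ℓ u v)
    {a b : V} (hne : H.Reachable a b) : gdist H' ℓ a b ≤ gdist H ℓ a b := by
  refine le_gdist hne fun w => ?_
  have := gdist_le_walkLen hnn (w.mapLe hle)
  rwa [walkLen_mapLe] at this

lemma slope_bound (φ : V → ℝ) (hφ : ∀ a b, H.Adj a b → φ b ≤ φ a + ℓ a b) :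
    ∀ {a b : V} (w : H.Walk a b), φ b ≤ φ a + walkLen ℓ w := by
  intro a b w
  induction w with
  | nil => simp [walkLen_nil]
  | cons h p ih =>
    rw [walkLen_cons]
    have := hφ _ _ h
    linarith

lemma reach_or {u v : V} : ∀ {a x : V} (_ : H.Walk a x),
    ((H \ fromEdgeSet {s(u,v)}).Reachable u a ∨ (H \ fromEdgeSet {s(u,v)}).Reachable v a) →
    ((H \ fromEdgeSet {s(u,v)}).Reachable u x ∨ (H \ fromEdgeSet {s(u,v)}).Reachable v x) := by
  intro a x w
  induction w with
  | nil => exact id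
  | @cons a b x hab p ih =>
    intro h
    apply ih
    by_cases he : s(a, b) = s(u, v)
    · rw [Sym2.eq_iff] at he
      rcases he with ⟨rfl, rfl⟩ | ⟨rfl, rfl⟩
      · exact Or.inr (SimpleGraph.Reachable.refl _)
      · exact Or.inl (SimpleGraph.Reachable.refl _)
    · have hab' : (H \ fromEdgeSet {s(u,v)}).Adj a b := by
        rw [sdiff_adj, fromEdgeSet_adj]
        exact ⟨hab, fun hc => he hc.1⟩
      rcases h with h | h
      · exact Or.inl (h.trans hab'.reachable)
      · exact Or.inr (h.trans hab'.reachable)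

lemma tree_edge_aux {T : SimpleGraph V} (hnn : ∀ u v, 0 ≤ ℓ u v)
    (hcon : T.Connected) {s u v : V} (huv : T.Adj u v)
    (hbr : ¬(T \ fromEdgeSet {s(u,v)}).Reachable u v)
    (hs : (T \ fromEdgeSet {s(u,v)}).Reachable u s) :
    gdist T ℓ s u + ℓ u v ≤ gdist T ℓ s v := by
  classical
  set T' := T \ fromEdgeSet {s(u,v)} with hT'
  have hsu : T'.Reachable s u := hs.symm
  set C : ℝ := gdist T' ℓ s u + ℓ u v with hC
  set φ : V → ℝ := fun x =>
    if T'.Reachable s x then gdist T' ℓ s x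
    else if T'.Reachable v x then C + gdist T' ℓ v x else 0 with hφdef
  have hφslope : ∀ a b, T.Adj a b → φ b ≤ φ a + ℓ a b := by
    intro a b hab
    by_cases he : s(a, b) = s(u, v)
    · rw [Sym2.eq_iff] at he
      rcases he with ⟨rfl, rfl⟩ | ⟨rfl, rfl⟩
      · -- a = u, b = v
        have hnsv : ¬ T'.Reachable s b := fun h => hbr (hsu.symm.trans h)
        have h1 : φ a = gdist T' ℓ s a := if_pos hsu
        have h2 : φ b = C + gdist T' ℓ b b := by
          rw [hφdef]; simp only [if_neg hnsv, if_pos (SimpleGraph.Reachable.refl b)]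
        rw [h1, h2, gdist_self hnn]
        simp [hC]
      · -- a = v, b = u
        have hnsv : ¬ T'.Reachable s a := fun h => hbr (hsu.symm.trans h)
        have h1 : φ b = gdist T' ℓ s b := if_pos hsu
        have h2 : φ a = C + gdist T' ℓ a a := by
          rw [hφdef]; simp only [if_neg hnsv, if_pos (SimpleGraph.Reachable.refl a)]
        rw [h1, h2, gdist_self hnn, hC]
        have := hnn b a
        have := hnn a b
        linarith
    · have hab' : T'.Adj a b := by
        rw [hT', sdiff_adj, fromEdgeSet_adj]
        exact ⟨hab, fun hc => he hc.1⟩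
      by_cases hsa : T'.Reachable s a
      · have hsb : T'.Reachable s b := hsa.trans hab'.reachable
        rw [hφdef]
        simp only [if_pos hsa, if_pos hsb]
        exact gdist_adj hnn hsa hab'
      · have hnsb : ¬ T'.Reachable s b := fun h => hsa (h.trans hab'.symm.reachable)
        by_cases hva : T'.Reachable v a
        · have hvb : T'.Reachable v b := hva.trans hab'.reachable
          rw [hφdef]
          simp only [if_neg hsa, if_neg hnsb, if_pos hva, if_pos hvb]
          have := gdist_adj hnn hva hab'
          linarith
        · have hnvb : ¬ T'.Reachable v b := fun h => hva (h.trans hab'.symm.reachable)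
          rw [hφdef]
          simp only [if_neg hsa, if_neg hnsb, if_neg hva, if_neg hnvb]
          simpa using hnn a b
  have hφs : φ s = 0 := by
    rw [hφdef]
    simp only [if_pos (SimpleGraph.Reachable.refl s)]
    exact gdist_self hnn s
  have hφv : φ v = C := by
    have hnsv : ¬ T'.Reachable s v := fun h => hbr (hsu.symm.trans h)
    rw [hφdef]
    simp only [if_neg hnsv, if_pos (SimpleGraph.Reachable.refl v)]
    rw [gdist_self hnn, add_zero]
  have hTle : gdist T ℓ s u ≤ gdist T' ℓ s u :=
    gdist_anti (by rw [hT']; exact sdiff_le) hnn hsu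
  refine le_gdist (hcon.preconnected s v) fun w => ?_
  have := slope_bound φ hφslope w
  rw [hφs, hφv, zero_add] at this
  rw [hC] at this
  linarith

lemma tree_edge {T : SimpleGraph V} (hnn : ∀ u v, 0 ≤ ℓ u v)
    (hsym : ∀ u v, ℓ u v = ℓ v u) (hT : T.IsTree) {s u v : V} (huv : T.Adj u v) :
    gdist T ℓ s u + ℓ u v ≤ gdist T ℓ s v ∨ gdist T ℓ s v + ℓ u v ≤ gdist T ℓ s u := by
  have hbr : ¬(T \ fromEdgeSet {s(u,v)}).Reachable u v :=
    (isAcyclic_iff_forall_adj_isBridge.mp hT.IsAcyclic huv)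
  obtain ⟨w⟩ := hT.isConnected.preconnected u s
  have := reach_or (u := u) (v := v) w (Or.inl (SimpleGraph.Reachable.refl u))
  rcases this with h | h
  · exact Or.inl (tree_edge_aux hnn hT.isConnected huv hbr h)
  · right
    have hbr' : ¬(T \ fromEdgeSet {s(v,u)}).Reachable v u := by
      rw [Sym2.eq_swap]
      exact fun hc => hbr hc.symm
    have h' : (T \ fromEdgeSet {s(v,u)}).Reachable v s := by
      rwa [Sym2.eq_swap]
    have := tree_edge_aux hnn hT.isConnected huv.symm hbr' h'
    rw [hsym u v]
    exact this


/-- Let `𝒢` be the continuous graph of a connected weighted graph `G`, `s` a source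
(a vertex of `𝒢`; in the paper the source is inserted as a vertex), and `T` a
shortest-path tree rooted at `s` spanning `V(G)`.  For each edge `xy ∉ E(T)` let
`ω_s(xy) = (d(s,x) + ℓ(xy) + d(s,y))/2`.  Then the eccentricity of `s` in `𝒢`
(the supremum of `d_𝒢(s,q)` over all points `q` of the continuous graph, where the
distance from `s` to the point of edge `uv` at offset `λ` is
`min(d(s,u)+λ, d(s,v)+ℓ(uv)−λ)`) satisfies
`ecc(s,𝒢) = max(max_{x ∈ V} d(s,x), max_{xy ∉ E(T)} ω_s(xy))`. -/
theorem ecc_formula [Fintype V] (G : SimpleGraph V) (hG : G.Connected)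
    (ℓ : V → V → ℝ) (hsym : ∀ u v, ℓ u v = ℓ v u) (hnn : ∀ u v, 0 ≤ ℓ u v)
    (s : V) (T : SimpleGraph V) (hTG : T ≤ G) (hT : T.IsTree)
    (hsp : ∀ x : V, gdist T ℓ s x = gdist G ℓ s x) :
    sSup {x | ∃ (u v : V) (lam : ℝ), G.Adj u v ∧ lam ∈ Set.Icc 0 (ℓ u v) ∧
        x = min (gdist G ℓ s u + lam) (gdist G ℓ s v + (ℓ u v - lam))}
    = max (sSup {x | ∃ v : V, x = gdist G ℓ s v})
          (sSup {x | ∃ u v : V, G.Adj u v ∧ ¬ T.Adj u v ∧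
              x = (gdist G ℓ s u + ℓ u v + gdist G ℓ s v) / 2}) := by

  classical
  have hWne : ∀ x y : V, G.Reachable x y := fun x y => hG.preconnected x y
  have hdnn : ∀ v : V, 0 ≤ gdist G ℓ s v := fun v => gdist_nonneg hnn (hWne s v)
  have htri : ∀ u v : V, G.Adj u v → gdist G ℓ s v ≤ gdist G ℓ s u + ℓ u v :=
    fun u v h => gdist_adj hnn (hWne s u) h
  have hds : gdist G ℓ s s = 0 := gdist_self hnn s
  set S := {x | ∃ (u v : V) (lam : ℝ), G.Adj u v ∧ lam ∈ Set.Icc 0 (ℓ u v) ∧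
      x = min (gdist G ℓ s u + lam) (gdist G ℓ s v + (ℓ u v - lam))} with hS
  set A := {x | ∃ v : V, x = gdist G ℓ s v} with hA
  set B := {x | ∃ u v : V, G.Adj u v ∧ ¬ T.Adj u v ∧
      x = (gdist G ℓ s u + ℓ u v + gdist G ℓ s v) / 2} with hB
  have hAfin : A.Finite := by
    have : A = Set.range (fun v => gdist G ℓ s v) := by
      ext x; simp [hA, Set.range, eq_comm]
    rw [this]; exact Set.finite_range _
  have hAbdd : BddAbove A := hAfin.bddAbove
  set F := Set.range (fun p : V × V =>
      (gdist G ℓ s p.1 + ℓ p.1 p.2 + gdist G ℓ s p.2) / 2) with hF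
  have hFfin : F.Finite := Set.finite_range _
  have hBbdd : BddAbove B := by
    refine (hFfin.subset ?_).bddAbove
    rintro x ⟨u, v, -, -, rfl⟩
    exact ⟨(u, v), rfl⟩
  have hSbdd : BddAbove S := by
    refine ⟨sSup F, ?_⟩
    rintro x ⟨u, v, lam, huv, ⟨h0, h1⟩, rfl⟩
    have hle : min (gdist G ℓ s u + lam) (gdist G ℓ s v + (ℓ u v - lam)) ≤
        (gdist G ℓ s u + ℓ u v + gdist G ℓ s v) / 2 := by
      rcases le_total (gdist G ℓ s u + lam) (gdist G ℓ s v + (ℓ u v - lam)) with h | h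
      · rw [min_eq_left h]; linarith
      · rw [min_eq_right h]; linarith
    exact le_trans hle (le_csSup hFfin.bddAbove ⟨(u, v), rfl⟩)
  have hSnn : ∀ x ∈ S, 0 ≤ x := by
    rintro x ⟨u, v, lam, huv, ⟨h0, h1⟩, rfl⟩
    exact le_min (add_nonneg (hdnn u) h0) (add_nonneg (hdnn v) (by linarith))
  have hdA : ∀ v : V, gdist G ℓ s v ≤ sSup A := fun v => le_csSup hAbdd ⟨v, rfl⟩
  have hA0 : 0 ≤ sSup A := hds ▸ hdA s
  have hRHS0 : 0 ≤ max (sSup A) (sSup B) := le_trans hA0 (le_max_left _ _)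
  apply le_antisymm
  · refine Real.sSup_le ?_ hRHS0
    rintro x ⟨u, v, lam, huv, ⟨hl0, hl1⟩, rfl⟩
    have hmin : min (gdist G ℓ s u + lam) (gdist G ℓ s v + (ℓ u v - lam)) ≤
        (gdist G ℓ s u + ℓ u v + gdist G ℓ s v) / 2 := by
      rcases le_total (gdist G ℓ s u + lam) (gdist G ℓ s v + (ℓ u v - lam)) with h | h
      · rw [min_eq_left h]; linarith
      · rw [min_eq_right h]; linarith
    by_cases hTadj : T.Adj u v
    · have hte := tree_edge hnn hsym hT (s := s) hTadj
      rw [hsp u, hsp v] at hte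
      refine le_trans hmin (le_trans ?_ (le_max_left _ _))
      rcases hte with h | h
      · exact le_trans (by linarith) (hdA v)
      · exact le_trans (by linarith) (hdA u)
    · exact le_trans hmin
        (le_trans (le_csSup hBbdd ⟨u, v, huv, hTadj, rfl⟩) (le_max_right _ _))
  · refine max_le ?_ ?_
    · refine Real.sSup_le ?_ (Real.sSup_nonneg hSnn)
      rintro x ⟨v, rfl⟩
      by_cases hv : v = s
      · subst hv; rw [hds]; exact Real.sSup_nonneg hSnn
      · obtain ⟨u, hu⟩ : ∃ u, G.Adj v u := by
          obtain ⟨w⟩ := hWne v s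
          cases w with
          | nil => exact absurd rfl hv
          | cons h p => exact ⟨_, h⟩
        refine le_csSup hSbdd ⟨v, u, 0, hu, ⟨le_refl 0, hnn v u⟩, ?_⟩
        rw [min_eq_left]
        · ring
        · have h2 := htri u v hu.symm
          rw [hsym v u]
          linarith
    · refine Real.sSup_le ?_ (Real.sSup_nonneg hSnn)
      rintro x ⟨u, v, huv, hTuv, rfl⟩
      have h1 := htri u v huv
      have h2 := htri v u huv.symm
      rw [hsym v u] at h2
      refine le_csSup hSbdd ⟨u, v, (gdist G ℓ s v + ℓ u v - gdist G ℓ s u) / 2, huv,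
        ⟨by linarith, by linarith⟩, ?_⟩
      rw [min_eq_left (by linarith)]
      ring
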